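/- Fix p ∈ {0,…,h̄−1} and assume 1 ≤ b ≤ u − v. Let c and c' be two codewords of C̃ such that H_{i_p,j}(a,m)[c] = H_{i_p,j}(a,m)[c'] for every helper rack j ∈ R, every m ∈ {0,…,b−1} and every a ∈ {0,…,s̄^n̄ − 1}. Then: (i) ∑_{g=0}^{u−1} θ^{g·m}·c(i_p·u+g, a, (p+x) mod L) = ∑_{g=0}^{u−1} θ^{g·m}·c'(i_p·u+g, a, (p+x) mod L) for every x ∈ {0,…,s̄−1}, every m ∈ {0,…,b−1} and every a; and (ii) H_{i_p,i}(a,m)[c] = H_{i_p,i}(a,m)[c'] for every i ∈ F∖{i_p}, every m ∈ {0,…,b−1} and every a. In other words, in the download phase host rack i_p can recover these quantities from the symbols H_{i_p,j}(a,m) downloaded from the d̄ helper racks. -/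

import Mathlib

/-- Replace the `i`-th digit of the `s`-ary expansion of `a` by `x`
(the paper's notation `a(i, x)`). -/
def replaceDigit (s a i x : ℕ) : ℕ := a - a / s ^ i % s * s ^ i + x * s ^ i

/-- The combined symbol `H_{i_p, j}(a, m)[c]` of the paper:
`∑_{x=0}^{sbar−1} ∑_{g=0}^{u−1} θ^{g·m} · c(j·u+g, a(i_p, a_{i_p} ⊕ x), (p+x) mod L)`,
where `ip` is the rack index `i_p`, `⊕` denotes addition modulo `sbar`, and the layer
index is taken modulo `L`. -/
def Hval {𝔽 : Type*} [Field 𝔽] (θ : 𝔽) (sbar u L ip p j m : ℕ)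
    (c : ℕ → ℕ → ℕ → 𝔽) (a : ℕ) : 𝔽 :=
  ∑ x ∈ Finset.range sbar, ∑ g ∈ Finset.range u,
    θ ^ (g * m) *
      c (j * u + g) (replaceDigit sbar a ip ((a / sbar ^ ip % sbar + x) % sbar))
        ((p + x) % L)

lemma replaceDigit_eq (s a i x : ℕ) :
    replaceDigit s a i x = a / s ^ (i+1) * s ^ (i+1) + x * s ^ i + a % s ^ i := by
  have h1 : a % s ^ (i+1) = a % s ^ i + s ^ i * (a / s ^ i % s) := Nat.mod_pow_succ
  have h2 : s ^ (i+1) * (a / s ^ (i+1)) + a % s ^ (i+1) = a := Nat.div_add_mod a _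
  have h3 : a / s ^ i % s * s ^ i ≤ a := by
    calc a / s ^ i % s * s ^ i ≤ a / s ^ i * s ^ i := by
          exact Nat.mul_le_mul_right _ (Nat.mod_le _ _)
      _ ≤ a := Nat.div_mul_le_self a _
  have h4 : a / s ^ (i+1) * s ^ (i+1) = s ^ (i+1) * (a / s ^ (i+1)) := Nat.mul_comm _ _
  have h5 : s ^ i * (a / s ^ i % s) = a / s ^ i % s * s ^ i := Nat.mul_comm _ _
  unfold replaceDigit
  omega

lemma low_lt (s a i x : ℕ) (hs : 0 < s) (hx : x < s) :
    x * s ^ i + a % s ^ i < s ^ (i+1) := by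
  have h1 : a % s ^ i < s ^ i := Nat.mod_lt _ (pow_pos hs _)
  have h2 : (x + 1) * s ^ i ≤ s * s ^ i := Nat.mul_le_mul_right _ (Nat.succ_le_of_lt hx)
  have h3 : s ^ (i+1) = s ^ i * s := pow_succ s i
  have h4 : s * s ^ i = s ^ i * s := Nat.mul_comm _ _
  have h5 : (x + 1) * s ^ i = x * s ^ i + s ^ i := by ring
  omega

lemma div_pow_replace (s a i x : ℕ) (hs : 0 < s) :
    replaceDigit s a i x / s ^ i = a / s ^ (i+1) * s + x := by
  rw [replaceDigit_eq]
  have hsi : 0 < s ^ i := pow_pos hs _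
  have h : a / s ^ (i+1) * s ^ (i+1) + x * s ^ i + a % s ^ i
      = a % s ^ i + (a / s ^ (i+1) * s + x) * s ^ i := by ring
  rw [h, Nat.add_mul_div_right _ _ hsi, Nat.div_eq_of_lt (Nat.mod_lt _ hsi)]
  omega

lemma digit_replace_self (s a i x : ℕ) (hs : 0 < s) (hx : x < s) :
    replaceDigit s a i x / s ^ i % s = x := by
  rw [div_pow_replace s a i x hs, Nat.mul_comm, Nat.mul_add_mod, Nat.mod_eq_of_lt hx]

lemma div_pow_succ_replace (s a i x : ℕ) (hs : 0 < s) (hx : x < s) :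
    replaceDigit s a i x / s ^ (i+1) = a / s ^ (i+1) := by
  rw [replaceDigit_eq]
  have hsi : 0 < s ^ (i+1) := pow_pos hs _
  have hlow := low_lt s a i x hs hx
  rw [Nat.add_assoc, Nat.mul_comm, Nat.mul_add_div hsi, Nat.div_eq_of_lt hlow]
  omega

lemma mod_pow_replace (s a i x : ℕ) : replaceDigit s a i x % s ^ i = a % s ^ i := by
  rw [replaceDigit_eq]
  have h : a / s ^ (i+1) * s ^ (i+1) + x * s ^ i + a % s ^ i
      = a % s ^ i + (a / s ^ (i+1) * s + x) * s ^ i := by ring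
  rw [h, Nat.add_mul_mod_self_right, Nat.mod_mod_of_dvd _ dvd_rfl]

lemma digit_replace_gt (s a i i' x : ℕ) (hs : 0 < s) (hx : x < s) (hi : i < i') :
    replaceDigit s a i x / s ^ i' % s = a / s ^ i' % s := by
  have h : i' = (i + 1) + (i' - (i+1)) := by omega
  rw [h, pow_add, ← Nat.div_div_eq_div_mul, ← Nat.div_div_eq_div_mul,
    div_pow_succ_replace s a i x hs hx]

lemma digit_eq_mod (s a i : ℕ) (hs : 0 < s) :
    a / s ^ i % s = a % s ^ (i+1) / s ^ i := by
  have h1 : a % s ^ (i+1) = a % s ^ i + s ^ i * (a / s ^ i % s) := Nat.mod_pow_succ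
  have hsi : 0 < s ^ i := pow_pos hs _
  rw [h1, Nat.mul_comm, Nat.add_mul_div_right _ _ hsi,
    Nat.div_eq_of_lt (Nat.mod_lt _ hsi)]
  omega

lemma mod_pow_replace' (s a i j x : ℕ) (hj : j ≤ i) :
    replaceDigit s a i x % s ^ j = a % s ^ j := by
  have h := mod_pow_replace s a i x
  calc replaceDigit s a i x % s ^ j = replaceDigit s a i x % s ^ i % s ^ j :=
        (Nat.mod_mod_of_dvd _ (pow_dvd_pow s hj)).symm
    _ = a % s ^ i % s ^ j := by rw [h]
    _ = a % s ^ j := Nat.mod_mod_of_dvd _ (pow_dvd_pow s hj)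

lemma digit_replace_lt (s a i i' x : ℕ) (hs : 0 < s) (hi : i' < i) :
    replaceDigit s a i x / s ^ i' % s = a / s ^ i' % s := by
  rw [digit_eq_mod s _ i' hs, digit_eq_mod s a i' hs, mod_pow_replace' s a i (i'+1) x (by omega)]

lemma digit_replace_ne (s a i i' x : ℕ) (hs : 0 < s) (hx : x < s) (h : i' ≠ i) :
    replaceDigit s a i x / s ^ i' % s = a / s ^ i' % s := by
  rcases Nat.lt_or_ge i' i with h' | h'
  · exact digit_replace_lt s a i i' x hs h'
  · exact digit_replace_gt s a i i' x hs hx (by omega)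

lemma replace_lt (s a i x n : ℕ) (hs : 0 < s) (ha : a < s ^ n) (hi : i < n) (hx : x < s) :
    replaceDigit s a i x < s ^ n := by
  rw [replaceDigit_eq]
  have hlow := low_lt s a i x hs hx
  have hQ : a / s ^ (i+1) < s ^ (n - (i+1)) := by
    apply Nat.div_lt_of_lt_mul
    calc a < s ^ n := ha
      _ = s ^ (i+1) * s ^ (n - (i+1)) := by rw [← pow_add]; congr 1; omega
  have h2 : (a / s ^ (i+1) + 1) * s ^ (i+1) ≤ s ^ (n - (i+1)) * s ^ (i+1) :=
    Nat.mul_le_mul_right _ hQ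
  have h3 : s ^ (n - (i+1)) * s ^ (i+1) = s ^ n := by
    rw [← pow_add]; congr 1; omega
  have h4 : (a / s ^ (i+1) + 1) * s ^ (i+1) = a / s ^ (i+1) * s ^ (i+1) + s ^ (i+1) := by ring
  omega

lemma replace_replace (s a i x y : ℕ) (hs : 0 < s) (hx : x < s) :
    replaceDigit s (replaceDigit s a i x) i y = replaceDigit s a i y := by
  rw [replaceDigit_eq s (replaceDigit s a i x) i y,
    div_pow_succ_replace s a i x hs hx, mod_pow_replace s a i x, ← replaceDigit_eq]

lemma replace_digit_self (s a i : ℕ) : replaceDigit s a i (a / s ^ i % s) = a := by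
  unfold replaceDigit
  have h3 : a / s ^ i % s * s ^ i ≤ a := by
    calc a / s ^ i % s * s ^ i ≤ a / s ^ i * s ^ i := by
          exact Nat.mul_le_mul_right _ (Nat.mod_le _ _)
      _ ≤ a := Nat.div_mul_le_self a _
  omega

lemma vand_zero {𝔽 : Type*} [Field 𝔽] (T : Finset ℕ) (γ w : ℕ → 𝔽)
    (hγ : Set.InjOn γ T)
    (h : ∀ ℓ < T.card, ∑ t ∈ T, γ t ^ ℓ * w t = 0) :
    ∀ t ∈ T, w t = 0 := by
  classical
  let σ : Fin T.card → {x // x ∈ T} := T.equivFin.symm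
  let A : Matrix (Fin T.card) (Fin T.card) 𝔽 :=
    (Matrix.vandermonde (fun j => γ (σ j))).transpose
  have hdet : A.det ≠ 0 := by
    rw [Matrix.det_transpose, Matrix.det_vandermonde_ne_zero_iff]
    intro j j' hjj
    have : (σ j : ℕ) = (σ j' : ℕ) := hγ (σ j).2 (σ j').2 hjj
    exact T.equivFin.symm.injective (Subtype.ext this)
  have hmv : A.mulVec (fun j => w (σ j)) = 0 := by
    funext ℓ
    have e1 : A.mulVec (fun j => w (σ j)) ℓ = ∑ j : Fin T.card, γ (σ j) ^ (ℓ : ℕ) * w (σ j) := by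
      simp [A, Matrix.mulVec, Matrix.vandermonde, dotProduct, Matrix.transpose]
    rw [e1]
    have e2 : ∑ j : Fin T.card, γ (σ j) ^ (ℓ : ℕ) * w (σ j)
        = ∑ t ∈ T, γ t ^ (ℓ : ℕ) * w t := by
      rw [← Finset.sum_coe_sort T (fun t => γ t ^ (ℓ : ℕ) * w t)]
      exact Equiv.sum_comp T.equivFin.symm (fun (t : {x // x ∈ T}) => γ t ^ (ℓ : ℕ) * w t)
    rw [e2]
    simpa using h ℓ ℓ.2
  have hz := Matrix.eq_zero_of_mulVec_eq_zero hdet hmv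
  intro t ht
  have := congrFun hz (T.equivFin ⟨t, ht⟩)
  simpa [σ] using this

lemma vand_zero' {𝔽 : Type*} [Field 𝔽] (T : Finset ℕ) (β w : ℕ → 𝔽) (u m : ℕ)
    (hβ0 : ∀ t ∈ T, β t ≠ 0) (hβu : Set.InjOn (fun t => β t ^ u) T)
    (h : ∀ ℓ < T.card, ∑ t ∈ T, β t ^ (ℓ * u + m) * w t = 0) :
    ∀ t ∈ T, w t = 0 := by
  have key : ∀ t ∈ T, β t ^ m * w t = 0 := by
    apply vand_zero T (fun t => β t ^ u) (fun t => β t ^ m * w t) hβu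
    intro ℓ hℓ
    have h2 := h ℓ hℓ
    rw [← h2]
    apply Finset.sum_congr rfl
    intro t _
    rw [pow_add]
    ring
  intro t ht
  exact (mul_eq_zero.mp (key t ht)).resolve_left (pow_ne_zero _ (hβ0 t ht))

lemma pow_inj_of_lt_orderOf {𝔽 : Type*} [Field 𝔽] {ξ : 𝔽} (hξ : ξ ≠ 0) {a b : ℕ}
    (ha : a < orderOf ξ) (hb : b < orderOf ξ) (h : ξ ^ a = ξ ^ b) : a = b := by
  have aux : ∀ a b : ℕ, a ≤ b → a < orderOf ξ → b < orderOf ξ → ξ ^ a = ξ ^ b → a = b := by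
    intro a b hab ha hb h
    have h1 : ξ ^ a * ξ ^ (b - a) = ξ ^ a * 1 := by
      rw [mul_one, ← pow_add]
      have hba : a + (b - a) = b := by omega
      rw [hba]
      exact h.symm
    have h2 : ξ ^ (b - a) = 1 := mul_left_cancel₀ (pow_ne_zero _ hξ) h1
    have h3 : orderOf ξ ∣ b - a := orderOf_dvd_of_pow_eq_one h2
    rcases Nat.eq_zero_or_pos (b - a) with h4 | h4
    · omega
    · have := Nat.le_of_dvd h4 h3
      omega
  rcases le_total a b with hab | hab
  · exact aux a b hab ha hb h
  · exact (aux b a hab hb ha h.symm).symm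

lemma key {𝔽 : Type*} [Field 𝔽] (nbar u dbar sbar L r : ℕ) (ip p m a : ℕ)
    (θ ξ : 𝔽) (R : Finset ℕ) (e : ℕ → ℕ → ℕ → 𝔽)
    (hu : 0 < u) (hs : 0 < sbar) (hL0 : 0 < L)
    (hθu : θ ^ u = 1) (hξ0 : ξ ≠ 0) (hξord : nbar * u * sbar ≤ orderOf ξ)
    (hip : ip < nbar) (hRcard : R.card = dbar) (hRn : ∀ j ∈ R, j < nbar) (hipR : ip ∉ R)
    (ha : a < sbar ^ nbar)
    (hlt : ∀ ℓ < nbar - (dbar + 1) + sbar, ℓ * u + m < r)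
    (he : ∀ t < r, ∀ a' < sbar ^ nbar, ∀ y < L,
      ∑ i ∈ Finset.range nbar, ∑ g ∈ Finset.range u,
        θ ^ (g * t) * (ξ ^ (i * sbar + a' / sbar ^ i % sbar)) ^ t * e (i * u + g) a' y = 0)
    (hH0 : ∀ j ∈ R, Hval θ sbar u L ip p j m e a = 0) :
    (∀ i < nbar, i ≠ ip → i ∉ R → Hval θ sbar u L ip p i m e a = 0)
    ∧ (∀ x < sbar, ∑ g ∈ Finset.range u,
        θ ^ (g * m) * e (ip * u + g)
          (replaceDigit sbar a ip ((a / sbar ^ ip % sbar + x) % sbar)) ((p + x) % L) = 0) := by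
  classical
  set d := a / sbar ^ ip % sbar with hd
  have hdlt : d < sbar := Nat.mod_lt _ hs
  set T : Finset ℕ :=
    (Finset.range nbar \ insert ip R) ∪ (Finset.range sbar).image (fun x => nbar + x) with hT
  set E : ℕ → ℕ := fun t =>
    if t < nbar then t * sbar + a / sbar ^ t % sbar else ip * sbar + (d + (t - nbar)) % sbar
    with hE
  set w : ℕ → 𝔽 := fun t =>
    if t < nbar then Hval θ sbar u L ip p t m e a
    else ∑ g ∈ Finset.range u, θ ^ (g * m) *
      e (ip * u + g) (replaceDigit sbar a ip ((d + (t - nbar)) % sbar)) ((p + (t - nbar)) % L)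
    with hw
  -- membership characterization
  have hmem : ∀ t ∈ T, (t < nbar ∧ t ≠ ip ∧ t ∉ R) ∨ (nbar ≤ t ∧ t - nbar < sbar) := by
    intro t ht
    rw [hT, Finset.mem_union, Finset.mem_sdiff, Finset.mem_insert, Finset.mem_image] at ht
    rcases ht with ⟨h1, h2⟩ | ⟨x, hx, rfl⟩
    · left
      refine ⟨Finset.mem_range.mp h1, ?_, ?_⟩ <;> tauto
    · right
      simp only [Finset.mem_range] at hx
      omega
  -- cardinality
  have hsub : insert ip R ⊆ Finset.range nbar := by
    intro j hj
    rcases Finset.mem_insert.mp hj with rfl | hj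
    · exact Finset.mem_range.mpr hip
    · exact Finset.mem_range.mpr (hRn j hj)
  have hdisj : Disjoint (Finset.range nbar \ insert ip R)
      ((Finset.range sbar).image (fun x => nbar + x)) := by
    rw [Finset.disjoint_left]
    intro t ht1 ht2
    rw [Finset.mem_sdiff, Finset.mem_range] at ht1
    rw [Finset.mem_image] at ht2
    obtain ⟨x, _, rfl⟩ := ht2
    omega
  have hcardT : T.card = nbar - (dbar + 1) + sbar := by
    rw [hT, Finset.card_union_of_disjoint hdisj, Finset.card_sdiff_of_subset hsub,
      Finset.card_insert_of_notMem hipR, hRcard, Finset.card_range,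
      Finset.card_image_of_injective _ (add_right_injective nbar), Finset.card_range]
  -- div/mod computation for E
  have hEdm : ∀ s', (∀ ds, ds < sbar → (s' * sbar + ds) / sbar = s' ∧ (s' * sbar + ds) % sbar = ds) := by
    intro s' ds hds
    constructor
    · rw [Nat.mul_comm, Nat.mul_add_div hs, Nat.div_eq_of_lt hds, Nat.add_zero]
    · rw [Nat.mul_comm, Nat.mul_add_mod, Nat.mod_eq_of_lt hds]
  have hEinj : ∀ t ∈ T, ∀ t' ∈ T, E t = E t' → t = t' := by
    intro t ht t' ht' hEe
    have key : ∀ s' ∈ T, E s' / sbar = (if s' < nbar then s' else ip)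
        ∧ E s' % sbar = (if s' < nbar then a / sbar ^ s' % sbar else (d + (s' - nbar)) % sbar) := by
      intro s' hs'
      by_cases h : s' < nbar
      · simp only [hE, if_pos h]
        exact hEdm s' _ (Nat.mod_lt _ hs)
      · simp only [hE, if_neg h]
        exact hEdm ip _ (Nat.mod_lt _ hs)
    obtain ⟨hdiv, hmod⟩ := key t ht
    obtain ⟨hdiv', hmod'⟩ := key t' ht'
    rw [hEe] at hdiv hmod
    rcases hmem t ht with ⟨h1, h2, _⟩ | ⟨h1, h2⟩ <;> rcases hmem t' ht' with ⟨g1, g2, _⟩ | ⟨g1, g2⟩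
    · rw [hdiv'] at hdiv
      simp only [if_pos h1, if_pos g1] at hdiv
      omega
    · rw [hdiv'] at hdiv
      simp only [if_pos h1, if_neg (by omega : ¬ t' < nbar)] at hdiv
      omega
    · rw [hdiv'] at hdiv
      simp only [if_neg (by omega : ¬ t < nbar), if_pos g1] at hdiv
      omega
    · rw [hmod'] at hmod
      simp only [if_neg (by omega : ¬ t < nbar), if_neg (by omega : ¬ t' < nbar)] at hmod
      have hm : (t - nbar) % sbar = (t' - nbar) % sbar :=
        Nat.ModEq.add_left_cancel' d hmod.symm
      rw [Nat.mod_eq_of_lt h2, Nat.mod_eq_of_lt g2] at hm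
      omega
  have hEbound : ∀ t ∈ T, E t < nbar * sbar := by
    intro t ht
    have step : ∀ s' ds, s' < nbar → ds < sbar → s' * sbar + ds < nbar * sbar := by
      intro s' ds h1 h2
      calc s' * sbar + ds < s' * sbar + sbar := by omega
        _ = (s' + 1) * sbar := by ring
        _ ≤ nbar * sbar := Nat.mul_le_mul_right _ (by omega)
    rcases hmem t ht with ⟨h1, _, _⟩ | ⟨h1, _⟩
    · simp only [hE, if_pos h1]
      exact step t _ h1 (Nat.mod_lt _ hs)
    · simp only [hE, if_neg (by omega : ¬ t < nbar)]
      exact step ip _ hip (Nat.mod_lt _ hs)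
  have hβ0 : ∀ t ∈ T, (ξ ^ E t : 𝔽) ≠ 0 := fun t _ => pow_ne_zero _ hξ0
  have hβu : Set.InjOn (fun t => (ξ ^ E t : 𝔽) ^ u) T := by
    intro t ht t' ht' h
    simp only [← pow_mul] at h
    have b1 : E t * u < orderOf ξ := by
      calc E t * u < nbar * sbar * u := (Nat.mul_lt_mul_right hu).mpr (hEbound t ht)
        _ = nbar * u * sbar := by ring
        _ ≤ orderOf ξ := hξord
    have b2 : E t' * u < orderOf ξ := by
      calc E t' * u < nbar * sbar * u := (Nat.mul_lt_mul_right hu).mpr (hEbound t' ht')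
        _ = nbar * u * sbar := by ring
        _ ≤ orderOf ξ := hξord
    have := pow_inj_of_lt_orderOf hξ0 b1 b2 h
    exact hEinj t ht t' ht' (Nat.eq_of_mul_eq_mul_right hu this)
  have hA : ∀ x < sbar, replaceDigit sbar a ip ((d + x) % sbar) < sbar ^ nbar :=
    fun x _ => replace_lt sbar a ip _ nbar hs ha hip (Nat.mod_lt _ hs)
  -- the main system of equations
  have main : ∀ ℓ < T.card, ∑ t ∈ T, (ξ ^ E t) ^ (ℓ * u + m) * w t = 0 := by
    intro ℓ hℓ
    have ht0 : ℓ * u + m < r := hlt ℓ (hcardT ▸ hℓ)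
    have hθg : ∀ g : ℕ, θ ^ (g * (ℓ * u + m)) = θ ^ (g * m) := by
      intro g
      have hexp : g * (ℓ * u + m) = u * (g * ℓ) + g * m := by ring
      rw [hexp, pow_add, pow_mul, hθu, one_pow, one_mul]
    have hsum0 : ∑ i ∈ Finset.range nbar, ∑ x ∈ Finset.range sbar, ∑ g ∈ Finset.range u,
        θ ^ (g * (ℓ * u + m)) * (ξ ^ (i * sbar + (replaceDigit sbar a ip ((d + x) % sbar)) / sbar ^ i % sbar)) ^ (ℓ * u + m)
          * e (i * u + g) (replaceDigit sbar a ip ((d + x) % sbar)) ((p + x) % L) = 0 := by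
      rw [Finset.sum_comm]
      apply Finset.sum_eq_zero
      intro x hx
      exact he _ ht0 _ (hA x (Finset.mem_range.mp hx)) _ (Nat.mod_lt _ hL0)
    rw [← Finset.sum_erase_add _ _ (Finset.mem_range.mpr hip)] at hsum0
    have e1 : ∀ i ∈ (Finset.range nbar).erase ip,
        (∑ x ∈ Finset.range sbar, ∑ g ∈ Finset.range u,
          θ ^ (g * (ℓ * u + m)) * (ξ ^ (i * sbar + (replaceDigit sbar a ip ((d + x) % sbar)) / sbar ^ i % sbar)) ^ (ℓ * u + m)
            * e (i * u + g) (replaceDigit sbar a ip ((d + x) % sbar)) ((p + x) % L))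
        = (ξ ^ E i) ^ (ℓ * u + m) * w i := by
      intro i hi
      obtain ⟨hne, hir⟩ := Finset.mem_erase.mp hi
      have hilt : i < nbar := Finset.mem_range.mp hir
      have hEi : E i = i * sbar + a / sbar ^ i % sbar := by
        simp only [hE]; rw [if_pos hilt]
      have hwi : w i = Hval θ sbar u L ip p i m e a := by
        simp only [hw]; rw [if_pos hilt]
      rw [hEi, hwi, Hval, ← hd]
      rw [Finset.mul_sum]
      apply Finset.sum_congr rfl
      intro x hx
      rw [Finset.mul_sum]
      apply Finset.sum_congr rfl
      intro g hg
      rw [digit_replace_ne sbar a ip i ((d + x) % sbar) hs (Nat.mod_lt _ hs) hne, hθg]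
      ring
    have e2 : (∑ x ∈ Finset.range sbar, ∑ g ∈ Finset.range u,
        θ ^ (g * (ℓ * u + m)) * (ξ ^ (ip * sbar + (replaceDigit sbar a ip ((d + x) % sbar)) / sbar ^ ip % sbar)) ^ (ℓ * u + m)
          * e (ip * u + g) (replaceDigit sbar a ip ((d + x) % sbar)) ((p + x) % L))
        = ∑ x ∈ Finset.range sbar, (ξ ^ E (nbar + x)) ^ (ℓ * u + m) * w (nbar + x) := by
      apply Finset.sum_congr rfl
      intro x hx
      have hxx : (d + x) % sbar < sbar := Nat.mod_lt _ hs
      have hEx : E (nbar + x) = ip * sbar + (d + x) % sbar := by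
        simp only [hE]; rw [if_neg (by omega : ¬ nbar + x < nbar)]
        simp
      have hwx : w (nbar + x) = ∑ g ∈ Finset.range u, θ ^ (g * m) *
          e (ip * u + g) (replaceDigit sbar a ip ((d + x) % sbar)) ((p + x) % L) := by
        simp only [hw]; rw [if_neg (by omega : ¬ nbar + x < nbar)]
        simp
      rw [hEx, hwx, Finset.mul_sum]
      apply Finset.sum_congr rfl
      intro g hg
      rw [digit_replace_self sbar a ip ((d + x) % sbar) hs hxx, hθg]
      ring
    rw [Finset.sum_congr rfl e1, e2] at hsum0
    have hsetEq : (Finset.range nbar).erase ip = (Finset.range nbar \ insert ip R) ∪ R := by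
      ext t
      simp only [Finset.mem_erase, Finset.mem_range, Finset.mem_union, Finset.mem_sdiff,
        Finset.mem_insert]
      constructor
      · rintro ⟨h1, h2⟩
        by_cases htR : t ∈ R
        · exact Or.inr htR
        · exact Or.inl ⟨h2, by tauto⟩
      · rintro (⟨h1, h2⟩ | h1)
        · exact ⟨by tauto, h1⟩
        · exact ⟨by rintro rfl; exact hipR h1, hRn t h1⟩
    have hdisj2 : Disjoint (Finset.range nbar \ insert ip R) R := by
      rw [Finset.disjoint_left]
      intro t ht1 ht2
      rw [Finset.mem_sdiff, Finset.mem_insert] at ht1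
      exact ht1.2 (Or.inr ht2)
    have hRzero : ∑ j ∈ R, (ξ ^ E j) ^ (ℓ * u + m) * w j = 0 := by
      apply Finset.sum_eq_zero
      intro j hj
      have hjlt : j < nbar := hRn j hj
      have hwj : w j = 0 := by
        simp only [hw]; rw [if_pos hjlt]; exact hH0 j hj
      rw [hwj, mul_zero]
    rw [hsetEq, Finset.sum_union hdisj2, hRzero, add_zero] at hsum0
    rw [hT, Finset.sum_union hdisj, Finset.sum_image (fun x _ y _ h => by omega)]
    exact hsum0
  have hw0 := vand_zero' T (fun t => ξ ^ E t) w u m hβ0 hβu main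
  constructor
  · intro i hilt hne hnR
    have hiT : i ∈ T := by
      rw [hT, Finset.mem_union, Finset.mem_sdiff, Finset.mem_insert]
      left
      exact ⟨Finset.mem_range.mpr hilt, by tauto⟩
    have := hw0 i hiT
    simp only [hw] at this
    rwa [if_pos hilt] at this
  · intro x hx
    have hxT : nbar + x ∈ T := by
      rw [hT, Finset.mem_union, Finset.mem_image]
      right
      exact ⟨x, Finset.mem_range.mpr hx, rfl⟩
    have := hw0 _ hxT
    simp only [hw] at this
    rw [if_neg (by omega : ¬ nbar + x < nbar)] at this
    simpa using this

/-- **Lemma 1(1) of the paper** (download phase, case `1 ≤ b ≤ u − v`):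
if two codewords `c, c'` of the stacked code `C̃` (arrays
`c : node × index × layer → 𝔽` satisfying the parity-check equations) give the same
downloaded symbols `H_{i_p,j}(a,m)` for all helper racks `j ∈ R`, all `m < b` and all
`a < sbar^nbar`, then they agree on (i) the combinations
`∑_g θ^{g·m}·c(i_p·u+g, a, (p+x) mod L)` for `x < sbar`, and
(ii) the symbols `H_{i_p,i}(a,m)` for every other host rack `i ∈ F∖{i_p}`. -/
theorem stmt11 {𝔽 : Type*} [Field 𝔽] [Fintype 𝔽]
    (nbar u kbar hbar dbar δ v b : ℕ)
    (hnbar : 0 < nbar) (hu : 0 < u) (hkbar : 0 < kbar) (hhbar : 0 < hbar)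
    (hδ1 : 1 ≤ δ) (hδ2 : δ ≤ hbar - 1)
    (hv : v < u) (hb1 : 1 ≤ b) (hb2 : b ≤ u - v)
    (hd1 : kbar ≤ dbar) (hd2 : dbar ≤ nbar - hbar) (hhn : hbar ≤ nbar)
    (k n r sbar L : ℕ)
    (hk : k = kbar * u + v) (hn : n = nbar * u) (hr : r = n - k)
    (hsbar : sbar = dbar - kbar + 1) (hL : L = sbar + hbar - δ)
    (hcard : n * sbar + 1 ≤ Fintype.card 𝔽) (hdvd : u ∣ Fintype.card 𝔽 - 1)
    (ξ θ : 𝔽) (hξ : orderOf ξ = Fintype.card 𝔽 - 1) (hθ : orderOf θ = u)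
    -- the host racks `i₀ < i₁ < … < i_{hbar−1}`, given by `iF 0, …, iF (hbar−1)`
    (iF : ℕ → ℕ) (hiF : StrictMonoOn iF (Set.Iio hbar)) (hiFn : ∀ q < hbar, iF q < nbar)
    -- the helper racks
    (R : Finset ℕ) (hR : R.card = dbar) (hRn : ∀ j ∈ R, j < nbar)
    (hRF : ∀ j ∈ R, ∀ q < hbar, j ≠ iF q)
    -- two codewords of the stacked MDS array code `C̃`
    (c c' : ℕ → ℕ → ℕ → 𝔽)
    (hc : ∀ t < r, ∀ a < sbar ^ nbar, ∀ y < L,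
      ∑ i ∈ Finset.range nbar, ∑ g ∈ Finset.range u,
        θ ^ (g * t) * (ξ ^ (i * sbar + a / sbar ^ i % sbar)) ^ t * c (i * u + g) a y = 0)
    (hc' : ∀ t < r, ∀ a < sbar ^ nbar, ∀ y < L,
      ∑ i ∈ Finset.range nbar, ∑ g ∈ Finset.range u,
        θ ^ (g * t) * (ξ ^ (i * sbar + a / sbar ^ i % sbar)) ^ t * c' (i * u + g) a y = 0)
    (p : ℕ) (hp : p < hbar)
    -- the downloaded symbols agree
    (hH : ∀ j ∈ R, ∀ m < b, ∀ a < sbar ^ nbar,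
      Hval θ sbar u L (iF p) p j m c a = Hval θ sbar u L (iF p) p j m c' a) :
    (∀ x < sbar, ∀ m < b, ∀ a < sbar ^ nbar,
      ∑ g ∈ Finset.range u, θ ^ (g * m) * c (iF p * u + g) a ((p + x) % L)
        = ∑ g ∈ Finset.range u, θ ^ (g * m) * c' (iF p * u + g) a ((p + x) % L))
    ∧ (∀ q < hbar, q ≠ p → ∀ m < b, ∀ a < sbar ^ nbar,
      Hval θ sbar u L (iF p) p (iF q) m c a = Hval θ sbar u L (iF p) p (iF q) m c' a) := by
  classical
  have hs : 0 < sbar := by omega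
  have hL0 : 0 < L := by omega
  have hθu : θ ^ u = 1 := by rw [← hθ]; exact pow_orderOf_eq_one θ
  have hnpos : 0 < n := by rw [hn]; exact Nat.mul_pos hnbar hu
  have hns : 0 < n * sbar := Nat.mul_pos hnpos hs
  have hξ0 : ξ ≠ 0 := by
    intro h0
    have h1 := pow_orderOf_eq_one ξ
    rw [hξ, h0, zero_pow (by omega : Fintype.card 𝔽 - 1 ≠ 0)] at h1
    exact zero_ne_one h1
  have hξord : nbar * u * sbar ≤ orderOf ξ := by
    rw [hξ]
    have : nbar * u * sbar = n * sbar := by rw [hn]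
    omega
  have hip : iF p < nbar := hiFn p hp
  have hipR : iF p ∉ R := fun h => hRF (iF p) h p hp rfl
  set e : ℕ → ℕ → ℕ → 𝔽 := fun i a y => c i a y - c' i a y with hedef
  have he : ∀ t < r, ∀ a' < sbar ^ nbar, ∀ y < L,
      ∑ i ∈ Finset.range nbar, ∑ g ∈ Finset.range u,
        θ ^ (g * t) * (ξ ^ (i * sbar + a' / sbar ^ i % sbar)) ^ t * e (i * u + g) a' y = 0 := by
    intro t ht a' ha' y hy
    simp only [hedef, mul_sub, Finset.sum_sub_distrib]
    rw [hc t ht a' ha' y hy, hc' t ht a' ha' y hy, sub_zero]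
  have Hval_sub : ∀ j m a, Hval θ sbar u L (iF p) p j m e a
      = Hval θ sbar u L (iF p) p j m c a - Hval θ sbar u L (iF p) p j m c' a := by
    intro j m a
    simp only [Hval, hedef, mul_sub, Finset.sum_sub_distrib]
  have hlt : ∀ m < b, ∀ ℓ < nbar - (dbar + 1) + sbar, ℓ * u + m < r := by
    intro m hm ℓ hℓ
    have h1 : ℓ + 1 ≤ nbar - kbar := by omega
    have h2 : (ℓ + 1) * u ≤ (nbar - kbar) * u := Nat.mul_le_mul_right _ h1
    have h3 : (nbar - kbar) * u = nbar * u - kbar * u := Nat.sub_mul _ _ _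
    have h4 : (ℓ + 1) * u = ℓ * u + u := by ring
    have h5 : kbar * u ≤ nbar * u := Nat.mul_le_mul_right _ (by omega)
    omega
  have keyAll : ∀ m < b, ∀ a < sbar ^ nbar,
      (∀ i < nbar, i ≠ iF p → i ∉ R → Hval θ sbar u L (iF p) p i m e a = 0)
      ∧ (∀ x < sbar, ∑ g ∈ Finset.range u,
          θ ^ (g * m) * e (iF p * u + g)
            (replaceDigit sbar a (iF p) ((a / sbar ^ (iF p) % sbar + x) % sbar)) ((p + x) % L) = 0) := by
    intro m hm a ha
    exact key nbar u dbar sbar L r (iF p) p m a θ ξ R e hu hs hL0 hθu hξ0 hξord hip hR hRn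
      hipR ha (hlt m hm) he (fun j hj => by
        rw [Hval_sub]; exact sub_eq_zero.mpr (hH j hj m hm a ha))
  constructor
  · intro x hx m hm a ha
    set d := a / sbar ^ (iF p) % sbar with hd
    have hdlt : d < sbar := Nat.mod_lt _ hs
    set a₀ := replaceDigit sbar a (iF p) ((d + (sbar - x)) % sbar) with ha₀def
    have ha₀ : a₀ < sbar ^ nbar :=
      replace_lt sbar a (iF p) _ nbar hs ha hip (Nat.mod_lt _ hs)
    have hd₀ : a₀ / sbar ^ (iF p) % sbar = (d + (sbar - x)) % sbar :=
      digit_replace_self sbar a (iF p) _ hs (Nat.mod_lt _ hs)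
    have heq := (keyAll m hm a₀ ha₀).2 x hx
    have harg : (a₀ / sbar ^ (iF p) % sbar + x) % sbar = d := by
      rw [hd₀, Nat.mod_add_mod]
      have hxe : d + (sbar - x) + x = d + sbar := by omega
      rw [hxe, Nat.add_mod_right, Nat.mod_eq_of_lt hdlt]
    rw [harg] at heq
    have harg2 : replaceDigit sbar a₀ (iF p) d = a := by
      rw [ha₀def, replace_replace sbar a (iF p) _ d hs (Nat.mod_lt _ hs), hd,
        replace_digit_self]
    rw [harg2] at heq
    rw [← sub_eq_zero, ← Finset.sum_sub_distrib]
    rw [← heq]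
    apply Finset.sum_congr rfl
    intro g hg
    simp only [hedef, mul_sub]
  · intro q hq hqp m hm a ha
    have h1 : iF q < nbar := hiFn q hq
    have hne : iF q ≠ iF p := by
      intro h
      exact hqp (hiF.injOn (Set.mem_Iio.mpr hq) (Set.mem_Iio.mpr hp) h)
    have hnR : iF q ∉ R := fun h => hRF _ h q hq rfl
    have := (keyAll m hm a ha).1 (iF q) h1 hne hnR
    rw [Hval_sub] at this
    exact sub_eq_zero.mp this
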